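/- arXiv:2103.14068 — 2 statements merged into one kernel-verified Lean document; each statement's English description precedes it below -/
import Mathlib

section
/- For one-dimensional Gaussian output perturbation M(D) = f(D) + N(0, σ²) with Δ₂f ≤ 1 and σ = 1/μ, the mechanism satisfies μ-Gaussian differential privacy: the trade-off function between M(D) and M(D') for any neighboring D, D' is at least the trade-off function between N(0,1) and N(μ,1). -/
open MeasureTheory ProbabilityTheory

section GMAux

open Real Set Filter
open scoped NNReal ENNReal Topology

lemma GM_pdf_le_one (m : ℝ) (x : ℝ) : gaussianPDFReal m 1 x ≤ 1 := by
  unfold gaussianPDFReal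
  simp only [NNReal.coe_one, mul_one]
  have h1 : (√(2 * π))⁻¹ ≤ 1 := by
    rw [inv_le_one_iff₀]
    right
    rw [show (1:ℝ) = √1 from (Real.sqrt_one).symm]
    exact Real.sqrt_le_sqrt (by nlinarith [Real.pi_gt_three])
  have h2 : rexp (-(x - m) ^ 2 / 2) ≤ 1 := by
    rw [Real.exp_le_one_iff]
    have h := sq_nonneg (x - m)
    apply div_nonpos_of_nonpos_of_nonneg <;> nlinarith
  calc (√(2 * π))⁻¹ * rexp (-(x - m) ^ 2 / 2)
      ≤ 1 * 1 := mul_le_mul h1 h2 (Real.exp_nonneg _) zero_le_one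
    _ = 1 := by norm_num

lemma GM_integral_eq (m : ℝ) {v : ℝ≥0} (hv : v ≠ 0) (g : ℝ → ℝ) :
    ∫ x, g x ∂(gaussianReal m v) = ∫ x, gaussianPDFReal m v x * g x := by
  rw [gaussianReal_of_var_ne_zero m hv]
  have hmeas : Measurable (fun x => (gaussianPDFReal m v x).toNNReal) :=
    (measurable_gaussianPDFReal m v).real_toNNReal
  have hd : (gaussianPDF m v) = (fun x => ((gaussianPDFReal m v x).toNNReal : ℝ≥0∞)) := by
    funext x; rfl
  rw [hd, integral_withDensity_eq_integral_smul hmeas]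
  congr 1
  funext x
  simp only [NNReal.smul_def, smul_eq_mul]
  rw [Real.coe_toNNReal _ (gaussianPDFReal_nonneg m v x)]

lemma GM_measure_Ici (m : ℝ) {v : ℝ≥0} (hv : v ≠ 0) (t : ℝ) :
    ((gaussianReal m v) (Ici t)).toReal = ∫ x in Ici t, gaussianPDFReal m v x := by
  rw [gaussianReal_apply_eq_integral m hv]
  exact ENNReal.toReal_ofReal (setIntegral_nonneg measurableSet_Ici
    fun x _ => gaussianPDFReal_nonneg m v x)

lemma GM_pdf_shift (ν x : ℝ) :
    gaussianPDFReal ν 1 x = rexp (ν * x - ν ^ 2 / 2) * gaussianPDFReal 0 1 x := by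
  unfold gaussianPDFReal
  simp only [NNReal.coe_one, mul_one, sub_zero]
  rw [show rexp (ν * x - ν ^ 2 / 2) * ((√(2 * π))⁻¹ * rexp (-x ^ 2 / 2))
      = (√(2 * π))⁻¹ * (rexp (ν * x - ν ^ 2 / 2) * rexp (-x ^ 2 / 2)) by ring,
    ← Real.exp_add]
  congr 1
  ring

lemma GM_integrable_mul_pdf (m : ℝ) (v : ℝ≥0) (g : ℝ → ℝ)
    (hgm : Measurable g) (hb : ∀ x, |g x| ≤ 1) :
    Integrable (fun x => gaussianPDFReal m v x * g x) := by
  refine (integrable_gaussianPDFReal m v).mono'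
    ((measurable_gaussianPDFReal m v).mul hgm).aestronglyMeasurable ?_
  filter_upwards with x
  rw [Real.norm_eq_abs, abs_mul, abs_of_nonneg (gaussianPDFReal_nonneg m v x)]
  calc gaussianPDFReal m v x * |g x| ≤ gaussianPDFReal m v x * 1 :=
        mul_le_mul_of_nonneg_left (hb x) (gaussianPDFReal_nonneg m v x)
    _ = gaussianPDFReal m v x := mul_one _

lemma GM_np {ν : ℝ} (hν : 0 ≤ ν) (t : ℝ) (ψ : ℝ → ℝ) (hm : Measurable ψ)
    (h0 : ∀ x, 0 ≤ ψ x) (h1 : ∀ x, ψ x ≤ 1)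
    (hlev : ∫ x, ψ x ∂(gaussianReal 0 1) ≤ ((gaussianReal 0 1) (Ici t)).toReal) :
    ∫ x, ψ x ∂(gaussianReal ν 1) ≤ ((gaussianReal ν 1) (Ici t)).toReal := by
  have h1ne : (1 : ℝ≥0) ≠ 0 := one_ne_zero
  set χ : ℝ → ℝ := (Ici t).indicator (fun _ => (1:ℝ)) with hχ
  have hχm : Measurable χ := measurable_const.indicator measurableSet_Ici
  have hχb : ∀ x, |χ x| ≤ 1 := by
    intro x
    by_cases hx : x ∈ Ici t <;> simp [hχ, indicator_of_mem, indicator_of_notMem, hx]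
  have hψb : ∀ x, |ψ x| ≤ 1 := fun x => abs_le.2 ⟨by linarith [h0 x], h1 x⟩
  set k : ℝ := rexp (ν * t - ν ^ 2 / 2) with hk
  -- integrability
  have I1 := GM_integrable_mul_pdf ν 1 χ hχm hχb
  have I2 := GM_integrable_mul_pdf ν 1 ψ hm hψb
  have I3 := GM_integrable_mul_pdf 0 1 χ hχm hχb
  have I4 := GM_integrable_mul_pdf 0 1 ψ hm hψb
  -- pointwise inequality
  have hpt : ∀ x, 0 ≤ (χ x - ψ x) * (gaussianPDFReal ν 1 x - k * gaussianPDFReal 0 1 x) := by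
    intro x
    rw [GM_pdf_shift ν x,
      show rexp (ν * x - ν ^ 2 / 2) * gaussianPDFReal 0 1 x - k * gaussianPDFReal 0 1 x
        = (rexp (ν * x - ν ^ 2 / 2) - k) * gaussianPDFReal 0 1 x by ring]
    have hp0 : 0 ≤ gaussianPDFReal 0 1 x := gaussianPDFReal_nonneg 0 1 x
    by_cases hx : x ∈ Ici t
    · have hxt : t ≤ x := hx
      have : k ≤ rexp (ν * x - ν ^ 2 / 2) := by
        rw [hk]; apply Real.exp_le_exp.2; nlinarith
      have hχx : χ x = 1 := indicator_of_mem hx _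
      apply mul_nonneg
      · rw [hχx]; linarith [h1 x]
      · exact mul_nonneg (by linarith) hp0
    · have hxt : x < t := not_le.1 hx
      have : rexp (ν * x - ν ^ 2 / 2) ≤ k := by
        rw [hk]; apply Real.exp_le_exp.2; nlinarith
      have hχx : χ x = 0 := indicator_of_notMem hx _
      have ha : χ x - ψ x ≤ 0 := by rw [hχx]; linarith [h0 x]
      have hb2 : (rexp (ν * x - ν ^ 2 / 2) - k) * gaussianPDFReal 0 1 x ≤ 0 :=
        mul_nonpos_of_nonpos_of_nonneg (by linarith) hp0
      nlinarith
  -- expand the integral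
  have hint : Integrable (fun x => (χ x - ψ x) * (gaussianPDFReal ν 1 x - k * gaussianPDFReal 0 1 x)) := by
    have : (fun x => (χ x - ψ x) * (gaussianPDFReal ν 1 x - k * gaussianPDFReal 0 1 x))
        = fun x => ((gaussianPDFReal ν 1 x * χ x - gaussianPDFReal ν 1 x * ψ x)
            - k * (gaussianPDFReal 0 1 x * χ x)) + k * (gaussianPDFReal 0 1 x * ψ x) := by
      funext x; ring
    rw [this]
    have J1 : Integrable (fun x => gaussianPDFReal ν 1 x * χ x - gaussianPDFReal ν 1 x * ψ x) :=
      I1.sub I2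
    have J2 : Integrable (fun x => gaussianPDFReal ν 1 x * χ x - gaussianPDFReal ν 1 x * ψ x
        - k * (gaussianPDFReal 0 1 x * χ x)) := J1.sub (I3.const_mul k)
    exact J2.add (I4.const_mul k)
  have hkey : 0 ≤ ∫ x, (χ x - ψ x) * (gaussianPDFReal ν 1 x - k * gaussianPDFReal 0 1 x) :=
    integral_nonneg hpt
  have hexp : ∫ x, (χ x - ψ x) * (gaussianPDFReal ν 1 x - k * gaussianPDFReal 0 1 x)
      = ((∫ x, gaussianPDFReal ν 1 x * χ x) - (∫ x, gaussianPDFReal ν 1 x * ψ x))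
        - k * (∫ x, gaussianPDFReal 0 1 x * χ x) + k * (∫ x, gaussianPDFReal 0 1 x * ψ x) := by
    rw [show (fun x => (χ x - ψ x) * (gaussianPDFReal ν 1 x - k * gaussianPDFReal 0 1 x))
        = fun x => ((gaussianPDFReal ν 1 x * χ x - gaussianPDFReal ν 1 x * ψ x)
            - k * (gaussianPDFReal 0 1 x * χ x)) + k * (gaussianPDFReal 0 1 x * ψ x) from
      funext fun x => by ring]
    have J1 : Integrable (fun x => gaussianPDFReal ν 1 x * χ x - gaussianPDFReal ν 1 x * ψ x) :=
      I1.sub I2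
    have J2 : Integrable (fun x => gaussianPDFReal ν 1 x * χ x - gaussianPDFReal ν 1 x * ψ x
        - k * (gaussianPDFReal 0 1 x * χ x)) := J1.sub (I3.const_mul k)
    rw [integral_add J2 (I4.const_mul k), integral_sub J1 (I3.const_mul k),
      integral_sub I1 I2, integral_const_mul, integral_const_mul]
  -- translate the measure integrals
  have e1 : ∫ x, ψ x ∂(gaussianReal 0 1) = ∫ x, gaussianPDFReal 0 1 x * ψ x :=
    GM_integral_eq 0 h1ne ψ
  have e2 : ∫ x, ψ x ∂(gaussianReal ν 1) = ∫ x, gaussianPDFReal ν 1 x * ψ x :=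
    GM_integral_eq ν h1ne ψ
  have e3 : ∀ m : ℝ, ((gaussianReal m 1) (Ici t)).toReal = ∫ x, gaussianPDFReal m 1 x * χ x := by
    intro m
    rw [GM_measure_Ici m h1ne t]
    rw [← integral_indicator measurableSet_Ici]
    congr 1
    funext x
    by_cases hx : x ∈ Ici t <;>
      simp [hχ, indicator_of_mem, indicator_of_notMem, hx]
  have hk0 : 0 ≤ k := Real.exp_nonneg _
  rw [e1, e3 0] at hlev
  rw [e2, e3 ν]
  rw [hexp] at hkey
  nlinarith

lemma GM_tail_mono {ν μ' : ℝ} (h1 : 0 ≤ ν) (h2 : ν ≤ μ') (t : ℝ) :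
    ((gaussianReal ν 1) (Ici t)).toReal ≤ ((gaussianReal μ' 1) (Ici t)).toReal := by
  have hmap : ∀ m : ℝ, gaussianReal m 1 = (gaussianReal 0 1).map (· + m) := by
    intro m
    rw [gaussianReal_map_add_const, zero_add]
  have happ : ∀ m : ℝ, (gaussianReal m 1) (Ici t) = (gaussianReal 0 1) (Ici (t - m)) := by
    intro m
    rw [hmap m, Measure.map_apply (measurable_add_const m) measurableSet_Ici]
    congr 1
    ext x
    simp [sub_le_iff_le_add]
  rw [happ ν, happ μ']
  apply ENNReal.toReal_mono (measure_ne_top _ _)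
  exact measure_mono (Ici_subset_Ici.2 (by linarith))


lemma GM_exists_threshold {α : ℝ} (h0 : 0 < α) (h1 : α < 1) :
    ∃ t : ℝ, ((gaussianReal 0 1) (Ici t)).toReal = α := by
  set F : ℝ → ℝ := fun t => ((gaussianReal 0 1) (Ici t)).toReal with hF
  have hmono : Antitone F := fun s t hst =>
    ENNReal.toReal_mono (measure_ne_top _ _) (measure_mono (Ici_subset_Ici.2 hst))
  have key : ∀ s t : ℝ, s ≤ t → F s - F t ≤ t - s := by
    intro s t hst
    have hsplit : Ici s = Ico s t ∪ Ici t := by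
      ext x
      simp only [mem_Ici, mem_union, mem_Ico]
      constructor
      · intro hx
        rcases lt_or_ge x t with h | h
        · exact Or.inl ⟨hx, h⟩
        · exact Or.inr h
      · rintro (⟨h, _⟩ | h) <;> linarith
    have hdisj : Disjoint (Ico s t) (Ici t) := by
      apply disjoint_left.2
      rintro x ⟨_, hx2⟩ hx3
      exact absurd hx3 (not_le.2 hx2)
    have h1ne : (1 : ℝ≥0) ≠ 0 := one_ne_zero
    have hFs : F s = (∫ x in Ico s t, gaussianPDFReal 0 1 x) + ∫ x in Ici t, gaussianPDFReal 0 1 x := by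
      rw [hF]
      simp only
      rw [GM_measure_Ici 0 h1ne s, hsplit,
        setIntegral_union hdisj measurableSet_Ici
          ((integrable_gaussianPDFReal 0 1).integrableOn)
          ((integrable_gaussianPDFReal 0 1).integrableOn)]
    have hFt : F t = ∫ x in Ici t, gaussianPDFReal 0 1 x := GM_measure_Ici 0 h1ne t
    rw [hFs, hFt]
    have : (∫ x in Ico s t, gaussianPDFReal 0 1 x) ≤ ∫ x in Ico s t, (1:ℝ) := by
      apply setIntegral_mono_on ((integrable_gaussianPDFReal 0 1).integrableOn)
        (integrableOn_const (by rw [Real.volume_Ico]; exact ENNReal.ofReal_ne_top))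
        measurableSet_Ico
      exact fun x _ => GM_pdf_le_one 0 x
    have hconst : (∫ _x in Ico s t, (1:ℝ)) = t - s := by
      rw [setIntegral_const, measureReal_def, Real.volume_Ico, smul_eq_mul, mul_one,
        ENNReal.toReal_ofReal (by linarith)]
    linarith
  have hlip : LipschitzWith 1 F := by
    apply LipschitzWith.of_dist_le_mul
    intro s t
    rcases le_total s t with hst | hst
    · rw [Real.dist_eq, Real.dist_eq, NNReal.coe_one, one_mul]
      have h1 := key s t hst
      have h2 : F t ≤ F s := hmono hst
      rw [abs_of_nonneg (by linarith), abs_of_nonpos (by linarith)]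
      linarith
    · rw [Real.dist_eq, Real.dist_eq, NNReal.coe_one, one_mul]
      have h1 := key t s hst
      have h2 : F s ≤ F t := hmono hst
      rw [abs_of_nonpos (by linarith), abs_of_nonneg (by linarith)]
      linarith
  have htop : Tendsto F atTop (𝓝 0) := by
    have hI : ⋂ t : ℝ, Ici t = (∅ : Set ℝ) := by
      ext x
      simp only [mem_iInter, mem_Ici, mem_empty_iff_false, iff_false, not_forall, not_le]
      exact ⟨x + 1, by linarith⟩
    have h1 := tendsto_measure_iInter_atTop (μ := gaussianReal 0 1)
      (s := fun t : ℝ => Ici t) (fun i => measurableSet_Ici.nullMeasurableSet)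
      (fun i j hij => Ici_subset_Ici.2 hij) ⟨0, measure_ne_top _ _⟩
    rw [hI] at h1
    simp only [measure_empty] at h1
    have := (ENNReal.tendsto_toReal (by simp : (0:ℝ≥0∞) ≠ ⊤)).comp h1
    simp at this; exact this
  have hbot : Tendsto F atBot (𝓝 1) := by
    have h1 := tendsto_measure_Ici_atBot (gaussianReal 0 1)
    rw [measure_univ] at h1
    have := (ENNReal.tendsto_toReal (by simp : (1:ℝ≥0∞) ≠ ⊤)).comp h1
    simp at this; exact this
  obtain ⟨b, hb⟩ := (htop.eventually_lt_const h0).exists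
  obtain ⟨a, ha⟩ := (hbot.eventually_const_lt h1).exists
  set b' := max a b with hb'
  have hab : a ≤ b' := le_max_left a b
  have hFb' : F b' ≤ α := le_trans (hmono (le_max_right a b)) (le_of_lt hb)
  have := intermediate_value_Icc' hab (hlip.continuous.continuousOn) (f := F)
  obtain ⟨t, _, ht⟩ := this ⟨hFb', le_of_lt ha⟩
  exact ⟨t, ht⟩

end GMAux

/-- The trade-off function `T(P,Q)(α)`: the infimum of type II errors of tests
with type I error at most `α` for testing `P` against `Q`. -/
noncomputable def tradeOff {Ω : Type*} [MeasurableSpace Ω]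
    (P Q : Measure Ω) (α : ℝ) : ℝ :=
  sInf {β | ∃ φ : Ω → ℝ, Measurable φ ∧ (∀ x, 0 ≤ φ x ∧ φ x ≤ 1) ∧
    (∫ x, φ x ∂P) ≤ α ∧ β = 1 - ∫ x, φ x ∂Q}

open Real Set Filter
open scoped NNReal ENNReal Topology

/-- One-dimensional Gaussian output perturbation `M(D) = f(D) + N(0, 1/μ²)` of a
statistic with sensitivity at most `1` satisfies `μ`-Gaussian differential
privacy. -/
theorem gaussian_mechanism_gdp
    {D : Type*} (Neighbor : D → D → Prop)
    (f : D → ℝ) (μ : ℝ) (hμ : 0 < μ)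
    (hsens : ∀ d d', Neighbor d d' → |f d - f d'| ≤ 1)
    (σ : ℝ) (hσ : σ = 1 / μ)
    (M : D → Measure ℝ)
    (hMdef : ∀ d, M d = gaussianReal (f d) ((σ ^ 2).toNNReal)) :
    ∀ d d', Neighbor d d' → ∀ α : ℝ, α ∈ Set.Icc (0:ℝ) 1 →
      tradeOff (gaussianReal 0 1) (gaussianReal μ 1) α ≤ tradeOff (M d) (M d') α := by
  intro d d' hnb α hα
  obtain ⟨hα0, hα1⟩ := hα
  have h1ne : (1 : ℝ≥0) ≠ 0 := one_ne_zero
  have hσpos : 0 < σ := by rw [hσ]; positivity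
  set s : ℝ≥0 := (σ ^ 2).toNNReal with hs
  have hsne : s ≠ 0 := by
    rw [hs, ne_eq, Real.toNNReal_eq_zero, not_le]
    positivity
  have hMd : M d = gaussianReal (f d) s := hMdef d
  have hMd' : M d' = gaussianReal (f d') s := hMdef d'
  have hPd' : IsProbabilityMeasure (M d') := by rw [hMd']; infer_instance
  have hPd : IsProbabilityMeasure (M d) := by rw [hMd]; infer_instance
  -- the target set is bounded below by 0
  have hAbdd : BddBelow {β | ∃ φ : ℝ → ℝ, Measurable φ ∧ (∀ x, 0 ≤ φ x ∧ φ x ≤ 1) ∧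
      (∫ x, φ x ∂(gaussianReal 0 1)) ≤ α ∧ β = 1 - ∫ x, φ x ∂(gaussianReal μ 1)} := by
    refine ⟨0, ?_⟩
    rintro β ⟨φ, hφm, hφ01, _, rfl⟩
    have h2 : ∫ x, φ x ∂(gaussianReal μ 1) ≤ 1 := by
      have h3 : ∫ x, φ x ∂(gaussianReal μ 1) ≤ ∫ _x, (1:ℝ) ∂(gaussianReal μ 1) :=
        integral_mono_of_nonneg (Filter.Eventually.of_forall fun x => (hφ01 x).1)
          (integrable_const 1) (Filter.Eventually.of_forall fun x => (hφ01 x).2)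
      simpa using h3
    show (0:ℝ) ≤ 1 - ∫ x, φ x ∂(gaussianReal μ 1)
    linarith
  -- the right-hand set is nonempty
  have hBne : {β | ∃ φ : ℝ → ℝ, Measurable φ ∧ (∀ x, 0 ≤ φ x ∧ φ x ≤ 1) ∧
      (∫ x, φ x ∂(M d)) ≤ α ∧ β = 1 - ∫ x, φ x ∂(M d')}.Nonempty := by
    refine ⟨1 - ∫ _x, α ∂(M d'), fun _ => α, measurable_const,
      fun x => ⟨hα0, hα1⟩, ?_, rfl⟩
    simp [integral_const]
  rw [tradeOff, tradeOff]
  refine le_csInf hBne ?_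
  rintro b ⟨φ, hφm, hφ01, hlev, rfl⟩
  have hφb : ∀ x, |φ x| ≤ 1 := fun x => abs_le.2 ⟨by linarith [(hφ01 x).1], (hφ01 x).2⟩
  have hφd'le : ∫ x, φ x ∂(M d') ≤ 1 := by
    have h3 : ∫ x, φ x ∂(M d') ≤ ∫ _x, (1:ℝ) ∂(M d') :=
      integral_mono_of_nonneg (Filter.Eventually.of_forall fun x => (hφ01 x).1)
        (integrable_const 1) (Filter.Eventually.of_forall fun x => (hφ01 x).2)
    simpa using h3
  rcases eq_or_lt_of_le hα0 with h0eq | h0lt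
  · -- α = 0 : the test is a.e. zero
    have hint : Integrable (fun x => gaussianPDFReal (f d) s x * φ x) :=
      GM_integrable_mul_pdf (f d) s φ hφm hφb
    have hzero : ∫ x, gaussianPDFReal (f d) s x * φ x = 0 := by
      have hle : ∫ x, gaussianPDFReal (f d) s x * φ x ≤ 0 := by
        rw [← GM_integral_eq (f d) hsne φ, ← hMd]
        rw [← h0eq] at hlev
        exact hlev
      have hge : 0 ≤ ∫ x, gaussianPDFReal (f d) s x * φ x :=
        integral_nonneg fun x => mul_nonneg (gaussianPDFReal_nonneg _ _ _) (hφ01 x).1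
      linarith
    have hae : (fun x => gaussianPDFReal (f d) s x * φ x) =ᵐ[volume] 0 :=
      (integral_eq_zero_iff_of_nonneg
        (fun x => mul_nonneg (gaussianPDFReal_nonneg _ _ _) (hφ01 x).1) hint).1 hzero
    have hφae : φ =ᵐ[volume] 0 := by
      filter_upwards [hae] with x hx
      have hp : gaussianPDFReal (f d) s x ≠ 0 :=
        ne_of_gt (gaussianPDFReal_pos (f d) s x hsne)
      simpa [hp] using hx
    have hd'zero : ∫ x, φ x ∂(M d') = 0 := by
      rw [hMd', GM_integral_eq (f d') hsne φ]
      apply integral_eq_zero_of_ae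
      filter_upwards [hφae] with x hx
      simp [hx]
    have hmem : (1 : ℝ) ∈ {β | ∃ φ : ℝ → ℝ, Measurable φ ∧ (∀ x, 0 ≤ φ x ∧ φ x ≤ 1) ∧
        (∫ x, φ x ∂(gaussianReal 0 1)) ≤ α ∧ β = 1 - ∫ x, φ x ∂(gaussianReal μ 1)} := by
      refine ⟨fun _ => 0, measurable_const, fun x => ⟨le_refl _, zero_le_one⟩, ?_, by simp⟩
      simpa using h0eq.le
    have := csInf_le hAbdd hmem
    rw [hd'zero]
    linarith
  rcases eq_or_lt_of_le hα1 with h1eq | h1lt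
  · -- α = 1
    have hmem : (0 : ℝ) ∈ {β | ∃ φ : ℝ → ℝ, Measurable φ ∧ (∀ x, 0 ≤ φ x ∧ φ x ≤ 1) ∧
        (∫ x, φ x ∂(gaussianReal 0 1)) ≤ α ∧ β = 1 - ∫ x, φ x ∂(gaussianReal μ 1)} := by
      refine ⟨fun _ => 1, measurable_const, fun x => ⟨zero_le_one, le_refl _⟩, ?_, by simp⟩
      simp [h1eq]
    have := csInf_le hAbdd hmem
    linarith
  -- main case : 0 < α < 1
  obtain ⟨t, ht⟩ := GM_exists_threshold h0lt h1lt
  set c : ℝ := f d' - f d with hcdef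
  have hc : |c| ≤ 1 := by rw [hcdef, abs_sub_comm]; exact hsens d d' hnb
  set a : ℝ := if 0 ≤ c then σ else -σ with hadef
  set ν : ℝ := μ * |c| with hνdef
  have hν0 : 0 ≤ ν := mul_nonneg hμ.le (abs_nonneg c)
  have hνμ : ν ≤ μ := by nlinarith [abs_nonneg c]
  have hσμ : σ * μ = 1 := by rw [hσ]; field_simp
  have ha2 : a ^ 2 = σ ^ 2 := by
    rw [hadef]; split_ifs <;> ring
  have haν : a * ν + f d = f d' := by
    rw [hadef, hνdef]
    rcases le_or_gt 0 c with h | h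
    · rw [if_pos h, abs_of_nonneg h]
      have : σ * (μ * c) = (σ * μ) * c := by ring
      rw [this, hσμ, one_mul, hcdef]; ring
    · rw [if_neg (not_le.2 h), abs_of_neg h]
      have : -σ * (μ * -c) = (σ * μ) * c := by ring
      rw [this, hσμ, one_mul, hcdef]; ring
  have hTmeas : Measurable (fun x : ℝ => a * x + f d) :=
    (measurable_id.const_mul a).add_const (f d)
  have hmap : ∀ m : ℝ, (gaussianReal m 1).map (fun x => a * x + f d)
      = gaussianReal (a * m + f d) s := by
    intro m
    have h1 : (fun x : ℝ => a * x + f d) = (fun x => x + f d) ∘ (fun x => a * x) := rfl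
    rw [h1, ← Measure.map_map (measurable_add_const (f d)) (measurable_const_mul a)]
    have h2 : (fun x : ℝ => a * x) = (a * ·) := rfl
    rw [h2, gaussianReal_map_const_mul a]
    have h3 : (NNReal.mk (a ^ 2) (sq_nonneg a) * 1 : ℝ≥0) = s := by
      refine NNReal.coe_injective ?_
      rw [hs]
      push_cast
      rw [Real.coe_toNNReal _ (sq_nonneg σ), ha2]
      ring
    rw [h3]
    have h4 : (fun x : ℝ => x + f d) = (· + f d) := rfl
    rw [h4, gaussianReal_map_add_const (f d)]
  have hmap0 : (gaussianReal 0 1).map (fun x => a * x + f d) = M d := by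
    rw [hmap 0, hMd]; congr 1; ring
  have hmapν : (gaussianReal ν 1).map (fun x => a * x + f d) = M d' := by
    rw [hmap ν, hMd', haν]
  set ψ : ℝ → ℝ := fun x => φ (a * x + f d) with hψdef
  have hψm : Measurable ψ := hφm.comp hTmeas
  have hψint0 : ∫ x, ψ x ∂(gaussianReal 0 1) = ∫ x, φ x ∂(M d) := by
    rw [← hmap0, integral_map hTmeas.aemeasurable]
    exact hφm.aestronglyMeasurable
  have hψintν : ∫ x, ψ x ∂(gaussianReal ν 1) = ∫ x, φ x ∂(M d') := by
    rw [← hmapν, integral_map hTmeas.aemeasurable]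
    exact hφm.aestronglyMeasurable
  have hlev' : ∫ x, ψ x ∂(gaussianReal 0 1) ≤ ((gaussianReal 0 1) (Ici t)).toReal := by
    rw [hψint0, ht]; exact hlev
  have hNP := GM_np hν0 t ψ hψm (fun x => (hφ01 _).1) (fun x => (hφ01 _).2) hlev'
  have htail := GM_tail_mono hν0 hνμ t
  -- the indicator test is in the target set
  set χ : ℝ → ℝ := (Ici t).indicator (fun _ => (1:ℝ)) with hχdef
  have hχm : Measurable χ := measurable_const.indicator measurableSet_Ici
  have hχint : ∀ m : ℝ, ∫ x, χ x ∂(gaussianReal m 1) = ((gaussianReal m 1) (Ici t)).toReal := by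
    intro m
    rw [hχdef]
    exact integral_indicator_one measurableSet_Ici
  have hmem : (1 - ∫ x, χ x ∂(gaussianReal μ 1)) ∈ {β | ∃ φ : ℝ → ℝ, Measurable φ ∧
      (∀ x, 0 ≤ φ x ∧ φ x ≤ 1) ∧ (∫ x, φ x ∂(gaussianReal 0 1)) ≤ α ∧
      β = 1 - ∫ x, φ x ∂(gaussianReal μ 1)} := by
    refine ⟨χ, hχm, ?_, ?_, rfl⟩
    · intro x
      rw [hχdef]
      by_cases hx : x ∈ Ici t <;>
        simp [Set.indicator_of_mem, Set.indicator_of_notMem, hx]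
    · rw [hχint 0, ht]
  have hinf := csInf_le hAbdd hmem
  have hfinal : 1 - ∫ x, χ x ∂(gaussianReal μ 1) ≤ 1 - ∫ x, φ x ∂(M d') := by
    rw [hχint μ, ← hψintν]
    linarith
  linarith
end

section
/- The exponential mechanism with utility function u of sensitivity Δu, which outputs candidate r with probability proportional to exp(ε·u(D,r)/(2Δu)), is (ε, 0)-differentially private. -/
open Finset

/-- The exponential mechanism, which outputs candidate `r` with probability
proportional to `exp(ε u(D,r) / (2 Δu))`, is `(ε, 0)`-differentially private
when `Δu` bounds the sensitivity of the utility function `u`. -/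
theorem exponential_mechanism_dp
    {D R : Type*} [Fintype R] [Nonempty R] (Neighbor : D → D → Prop)
    (u : D → R → ℝ) (Δu ε : ℝ) (hΔ : 0 < Δu) (hε : 0 < ε)
    (hsens : ∀ r : R, ∀ d d', Neighbor d d' → |u d r - u d' r| ≤ Δu)
    (P : D → R → ℝ)
    (hPdef : ∀ d r, P d r =
      Real.exp (ε * u d r / (2 * Δu)) / ∑ r' : R, Real.exp (ε * u d r' / (2 * Δu))) :
    ∀ d d', Neighbor d d' → ∀ S : Finset R,
      ∑ r ∈ S, P d r ≤ Real.exp ε * ∑ r ∈ S, P d' r := by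
  intro d d' hnb S
  -- key : exp of ratio bound
  have hexp : ∀ r : R, Real.exp (ε * u d r / (2 * Δu)) ≤
      Real.exp (ε / 2) * Real.exp (ε * u d' r / (2 * Δu)) := by
    intro r
    rw [← Real.exp_add]
    apply Real.exp_le_exp.2
    have h := (abs_le.1 (hsens r d d' hnb)).2
    have : ε * u d r / (2 * Δu) - ε * u d' r / (2 * Δu) ≤ ε / 2 := by
      rw [div_sub_div_same, ← mul_sub]
      rw [div_le_div_iff₀ (by positivity) (by norm_num : (0:ℝ) < 2)]
      nlinarith
    linarith
  have hexp' : ∀ r : R, Real.exp (ε * u d' r / (2 * Δu)) ≤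
      Real.exp (ε / 2) * Real.exp (ε * u d r / (2 * Δu)) := by
    intro r
    rw [← Real.exp_add]
    apply Real.exp_le_exp.2
    have h := (abs_le.1 (hsens r d d' hnb)).1
    have : ε * u d' r / (2 * Δu) - ε * u d r / (2 * Δu) ≤ ε / 2 := by
      rw [div_sub_div_same, ← mul_sub]
      rw [div_le_div_iff₀ (by positivity) (by norm_num : (0:ℝ) < 2)]
      nlinarith
    linarith
  have hSd : (0:ℝ) < ∑ r' : R, Real.exp (ε * u d r' / (2 * Δu)) :=
    Finset.sum_pos (fun r _ => Real.exp_pos _) Finset.univ_nonempty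
  have hSd' : (0:ℝ) < ∑ r' : R, Real.exp (ε * u d' r' / (2 * Δu)) :=
    Finset.sum_pos (fun r _ => Real.exp_pos _) Finset.univ_nonempty
  have hden : ∑ r' : R, Real.exp (ε * u d' r' / (2 * Δu)) ≤
      Real.exp (ε / 2) * ∑ r' : R, Real.exp (ε * u d r' / (2 * Δu)) := by
    rw [Finset.mul_sum]
    exact Finset.sum_le_sum fun r _ => hexp' r
  have hpoint : ∀ r : R, P d r ≤ Real.exp ε * P d' r := by
    intro r
    rw [hPdef, hPdef]
    set A := Real.exp (ε * u d r / (2 * Δu)) with hA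
    set A' := Real.exp (ε * u d' r / (2 * Δu)) with hA'
    set Sd := ∑ r' : R, Real.exp (ε * u d r' / (2 * Δu)) with hSdd
    set Sd' := ∑ r' : R, Real.exp (ε * u d' r' / (2 * Δu)) with hSdd'
    have h1 : A ≤ Real.exp (ε / 2) * A' := hexp r
    have h2 : Sd' ≤ Real.exp (ε / 2) * Sd := hden
    have hA0 : 0 < A := Real.exp_pos _
    have hA'0 : 0 < A' := Real.exp_pos _
    have e1 : Real.exp ε = Real.exp (ε/2) * Real.exp (ε/2) := by
      rw [← Real.exp_add]; ring_nf
    rw [div_le_iff₀ hSd,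
      show Real.exp ε * (A' / Sd') * Sd = Real.exp ε * (A' * Sd) / Sd' by ring,
      le_div_iff₀ hSd']
    calc A * Sd' ≤ (Real.exp (ε / 2) * A') * (Real.exp (ε / 2) * Sd) := by
          apply mul_le_mul h1 h2 (le_of_lt hSd')
          positivity
      _ = Real.exp ε * (A' * Sd) := by rw [e1]; ring
  calc ∑ r ∈ S, P d r ≤ ∑ r ∈ S, Real.exp ε * P d' r :=
        Finset.sum_le_sum fun r _ => hpoint r
    _ = Real.exp ε * ∑ r ∈ S, P d' r := by rw [Finset.mul_sum]
end
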